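/- Let Q be a finite quiver with at least one arrow which is strongly connected, i.e. for any ordered pair of vertices i, j there exists a path in Q from i to j. Suppose there exists ν ∈ ℕ^{Q₁} such that the weight of every cycle in Q is a non-negative integer multiple of ν. Then every vertex of Q has exactly one outgoing arrow and exactly one incoming arrow; in other words, Q is a single oriented cycle. -/

import Mathlib

namespace QuiverPaper

variable {V A : Type}

/-- `IsPathFrom s t i j p`: the list of arrows `p` is a path from `i` to `j`
in the quiver with source map `s` and target map `t`. -/
def IsPathFrom (s t : A → V) : V → V → List A → Prop
  | i, j, [] => i = j
  | i, j, a :: p => s a = i ∧ IsPathFrom s t (t a) j p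

lemma isPathFrom_append (s t : A → V) :
    ∀ (u : List A) {i m j : V} (v : List A), IsPathFrom s t i m u → IsPathFrom s t m j v →
      IsPathFrom s t i j (u ++ v)
  | [], i, m, j, v, hu, hv => by cases hu; exact hv
  | a :: u, i, m, j, v, hu, hv => ⟨hu.1, isPathFrom_append s t u v hu.2 hv⟩

lemma isPathFrom_append_iff (s t : A → V) :
    ∀ (u : List A) {i j : V} (v : List A),
      IsPathFrom s t i j (u ++ v) → ∃ m, IsPathFrom s t i m u ∧ IsPathFrom s t m j v
  | [], i, j, v, h => ⟨i, rfl, h⟩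
  | a :: u, i, j, v, h => by
      obtain ⟨m, hu, hv⟩ := isPathFrom_append_iff s t u v h.2
      exact ⟨m, ⟨h.1, hu⟩, hv⟩

lemma getLast_target (s t : A → V) :
    ∀ (p : List A) {i j : V}, IsPathFrom s t i j p → ∀ (h : p ≠ []), t (p.getLast h) = j
  | [a], i, j, hp, h => by simpa [IsPathFrom] using hp.2
  | a :: b :: q, i, j, hp, h => by
      have := getLast_target s t (b :: q) hp.2 (by simp)
      simpa using this

lemma exists_first {a : A} : ∀ {p : List A}, a ∈ p → ∃ u v, p = u ++ a :: v ∧ a ∉ u := by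
  intro p hp
  induction p with
  | nil => simp at hp
  | cons b q ih =>
      by_cases hba : b = a
      · exact ⟨[], q, by simp [hba], by simp⟩
      · have : a ∈ q := by
          rcases List.mem_cons.mp hp with h | h
          · exact absurd h.symm hba
          · exact h
        obtain ⟨u, v, huv, hnotin⟩ := ih this
        refine ⟨b :: u, v, by simp [huv], ?_⟩
        simp only [List.mem_cons]
        rintro (h | h)
        · exact hba h.symm
        · exact hnotin h

lemma exists_last {a : A} : ∀ {p : List A}, a ∈ p → ∃ u v, p = u ++ a :: v ∧ a ∉ v := by
  intro p hp
  induction p with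
  | nil => simp at hp
  | cons b q ih =>
      by_cases hq : a ∈ q
      · obtain ⟨u, v, huv, hnotin⟩ := ih hq
        exact ⟨b :: u, v, by simp [huv], hnotin⟩
      · have hba : b = a := by
          rcases List.mem_cons.mp hp with h | h
          · exact h.symm
          · exact absurd h hq
        exact ⟨[], q, by simp [hba], hq⟩

/-- A strongly connected finite quiver with at least one arrow, in
which the weight of every cycle is a non-negative multiple of a fixed `ν ∈ ℕ^{Q₁}`, is a
single oriented cycle: every vertex has exactly one outgoing and one incoming arrow. -/
theorem stmt13 [Fintype V] [Fintype A] [DecidableEq A] (s t : A → V)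
    (harrow : Nonempty A)
    (hsc : ∀ i j : V, ∃ p : List A, IsPathFrom s t i j p)
    (ν : A → ℕ)
    (hν : ∀ (i : V) (p : List A), IsPathFrom s t i i p → ∃ k : ℕ, ∀ a : A, p.count a = k * ν a)
    (i : V) :
    (∃! a : A, s a = i) ∧ (∃! a : A, t a = i) := by
  -- ν is positive everywhere
  have νpos : ∀ a : A, 0 < ν a := by
    intro a
    obtain ⟨q, hq⟩ := hsc (t a) (s a)
    have hcyc : IsPathFrom s t (s a) (s a) (a :: q) := ⟨rfl, hq⟩
    obtain ⟨k, hk⟩ := hν (s a) (a :: q) hcyc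
    have : 0 < (a :: q).count a := by
      simp [List.count_cons]
    rw [hk a] at this
    exact Nat.pos_of_mul_pos_left (by rwa [Nat.mul_comm] at this)
  -- every nonempty cycle contains every arrow
  have hmem : ∀ (j : V) (p : List A), IsPathFrom s t j j p → p ≠ [] → ∀ a : A, a ∈ p := by
    intro j p hp hne a
    obtain ⟨k, hk⟩ := hν j p hp
    obtain ⟨b, hb⟩ := List.exists_mem_of_ne_nil p hne
    have hkpos : 0 < k := by
      have hcb : 0 < p.count b := List.count_pos_iff.mpr hb
      rw [hk b] at hcb
      exact Nat.pos_of_mul_pos_left (by rwa [Nat.mul_comm] at hcb)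
    have : 0 < p.count a := by
      rw [hk a]; exact Nat.mul_pos hkpos (νpos a)
    exact List.count_pos_iff.mp this
  -- build a nonempty cycle at i
  obtain ⟨a0⟩ := harrow
  obtain ⟨p1, hp1⟩ := hsc i (s a0)
  obtain ⟨p2, hp2⟩ := hsc (t a0) i
  set C : List A := p1 ++ a0 :: p2 with hCdef
  have hC : IsPathFrom s t i i C :=
    isPathFrom_append s t p1 (a0 :: p2) hp1 ⟨rfl, hp2⟩
  have hCne : C ≠ [] := by simp [hCdef]
  -- any arrow with source i is the head of any nonempty cycle at i
  have hfirst : ∀ (p : List A) (hp : IsPathFrom s t i i p) (hne : p ≠ []) (a : A),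
      s a = i → ∃ v, p = a :: v := by
    intro p hp hne a hsa
    have ha : a ∈ p := hmem i p hp hne a
    obtain ⟨u, v, huv, hnotin⟩ := exists_first ha
    obtain ⟨m, hu, hv⟩ := isPathFrom_append_iff s t u (a :: v) (huv ▸ hp)
    have hm : m = i := by rw [← hsa]; exact hv.1.symm
    rw [hm] at hu
    have hu_nil : u = [] := by
      by_contra hune
      exact hnotin (hmem i u hu hune a)
    subst hu_nil
    exact ⟨v, by simpa using huv⟩
  -- any arrow with target i is the last of any nonempty cycle at i
  have hlast : ∀ (p : List A) (hp : IsPathFrom s t i i p) (hne : p ≠ []) (a : A),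
      t a = i → ∃ u, p = u ++ [a] := by
    intro p hp hne a hta
    have ha : a ∈ p := hmem i p hp hne a
    obtain ⟨u, v, huv, hnotin⟩ := exists_last ha
    obtain ⟨m, hu, hv⟩ := isPathFrom_append_iff s t u (a :: v) (huv ▸ hp)
    have hv' : IsPathFrom s t i i v := hta ▸ hv.2
    have hv_nil : v = [] := by
      by_contra hvne
      exact hnotin (hmem i v hv' hvne a)
    subst hv_nil
    exact ⟨u, huv⟩
  constructor
  · -- unique outgoing arrow
    refine ⟨C.head hCne, ?_, ?_⟩
    · obtain ⟨b, q, hbq⟩ := List.exists_cons_of_ne_nil hCne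
      have : s b = i := by
        have := hC
        rw [hbq] at this
        exact this.1
      simpa [hbq] using this
    · intro a hsa
      obtain ⟨v, hv⟩ := hfirst C hC hCne a hsa
      simp [hv]
  · -- unique incoming arrow
    refine ⟨C.getLast hCne, getLast_target s t C hC hCne, ?_⟩
    intro a hta
    obtain ⟨u, hu⟩ := hlast C hC hCne a hta
    simp [hu]

end QuiverPaper
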